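/- The polynomial p(n) = (n³ − 19)(n² + n + 1) has a root modulo m for every positive integer m; that is, for every m ≥ 1 there exists an integer n with p(n) ≡ 0 (mod m). -/

import Mathlib

-- root of x^2+x+1 mod p for p ≡ 1 mod 3
lemma lemA1 (p : ℕ) (hp : p.Prime) (h3 : p % 3 = 1) :
    ∃ n : ℤ, (p : ℤ) ∣ n ^ 2 + n + 1 := by
  haveI : Fact p.Prime := ⟨hp⟩
  have hcard : Fintype.card (ZMod p)ˣ = p - 1 := ZMod.card_units_eq_totient p ▸ by
    rw [Nat.totient_prime hp]
  have hdvd : 3 ∣ Fintype.card (ZMod p)ˣ := by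
    rw [hcard]; omega
  obtain ⟨x, hx⟩ := exists_prime_orderOf_dvd_card 3 hdvd
  have hx3 : (x : ZMod p) ^ 3 = 1 := by
    have h := congrArg (Units.val) (hx ▸ pow_orderOf_eq_one x)
    simpa using h
  have hx1 : (x : ZMod p) ≠ 1 := by
    intro h
    have : x = 1 := Units.ext h
    rw [this, orderOf_one] at hx; omega
  have key : ((x : ZMod p) - 1) * ((x : ZMod p) ^ 2 + (x : ZMod p) + 1) = 0 := by
    linear_combination hx3
  have h0 : (x : ZMod p) ^ 2 + (x : ZMod p) + 1 = 0 := by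
    rcases mul_eq_zero.1 key with h | h
    · exact absurd (sub_eq_zero.1 h) hx1
    · exact h
  obtain ⟨n, hn⟩ := ZMod.intCast_surjective (x : ZMod p)
  refine ⟨n, (ZMod.intCast_zmod_eq_zero_iff_dvd _ p).1 ?_⟩
  push_cast
  rw [hn]; exact h0

-- Hensel lift for x^2+x+1
lemma lemA (p : ℕ) (hp : p.Prime) (h3 : p % 3 = 1) (k : ℕ) (hk : 1 ≤ k) :
    ∃ n : ℤ, (p : ℤ) ^ k ∣ n ^ 2 + n + 1 := by
  induction k with
  | zero => omega
  | succ k ih =>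
    rcases Nat.eq_or_lt_of_le hk with h | h
    · obtain ⟨n, hn⟩ := lemA1 p hp h3
      exact ⟨n, by rw [← h]; simpa using hn⟩
    · have hk1 : 1 ≤ k := by omega
      obtain ⟨n, t, ht⟩ := ih hk1
      have hpZ : Prime ((p : ℤ)) := Nat.prime_iff_prime_int.1 hp
      have hnd : ¬ ((p : ℤ) ∣ 2 * n + 1) := by
        intro hd
        have h1 : (p : ℤ) ∣ n ^ 2 + n + 1 := by
          rw [ht]
          exact Dvd.dvd.mul_right (dvd_pow_self _ (by omega)) t
        have h2 : (p : ℤ) ∣ 3 := by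
          have h4 : (3 : ℤ) = 4 * (n ^ 2 + n + 1) - (2 * n + 1) ^ 2 := by ring
          rw [h4]
          exact dvd_sub (h1.mul_left 4) (dvd_pow hd two_ne_zero)
        have h5 : (p : ℤ) ≤ 3 := Int.le_of_dvd (by norm_num) h2
        have := hp.two_le
        omega
      have hcop : IsCoprime ((p : ℤ)) (2 * n + 1) := hpZ.coprime_iff_not_dvd.2 hnd
      obtain ⟨u, v, huv⟩ := hcop
      obtain ⟨j, rfl⟩ : ∃ j, k = j + 1 := ⟨k - 1, by omega⟩
      refine ⟨n + (p : ℤ) ^ (j + 1) * (-t * v), ?_⟩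
      have e1 : (n + (p : ℤ) ^ (j + 1) * (-t * v)) ^ 2 + (n + (p : ℤ) ^ (j + 1) * (-t * v)) + 1
          = (p : ℤ) ^ (j + 2) * (t * u) + ((p : ℤ) ^ (j + 1)) ^ 2 * (-t * v) ^ 2 := by
        linear_combination ht - (p : ℤ) ^ (j + 1) * t * huv
      rw [e1]
      refine dvd_add (dvd_mul_right _ _) (dvd_mul_of_dvd_left ?_ _)
      rw [← pow_mul]
      exact pow_dvd_pow _ (by omega)

-- cube root of 19 mod 3^k
lemma lemB (k : ℕ) : ∃ n : ℤ, (3 : ℤ) ^ k ∣ n ^ 3 - 19 := by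
  induction k with
  | zero => exact ⟨1, by norm_num⟩
  | succ k ih =>
    rcases Nat.lt_or_ge k 2 with h | h
    · refine ⟨1, ?_⟩
      interval_cases k <;> norm_num
    · obtain ⟨n, t, ht⟩ := ih
      have h3n : ¬ ((3 : ℤ) ∣ n) := by
        intro hd
        have h1 : (3 : ℤ) ∣ n ^ 3 - 19 := by
          rw [ht]; exact Dvd.dvd.mul_right (dvd_pow_self _ (by omega)) t
        have h2 : (3 : ℤ) ∣ n ^ 3 - (n ^ 3 - 19) := dvd_sub (dvd_pow hd (by norm_num)) h1
        norm_num at h2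
      have h6 : (3 : ℤ) ∣ 1 - n ^ 6 := by
        have h1 : (3 : ℤ) ∣ n - 1 ∨ (3 : ℤ) ∣ n + 1 := by omega
        rcases h1 with hh | hh
        · have e : (1 : ℤ) - n ^ 6 = -((n - 1) * (n^5 + n^4 + n^3 + n^2 + n + 1)) := by ring
          rw [e]; exact dvd_neg.2 (hh.mul_right _)
        · have e : (1 : ℤ) - n ^ 6 = -((n + 1) * (n^5 - n^4 + n^3 - n^2 + n - 1)) := by ring
          rw [e]; exact dvd_neg.2 (hh.mul_right _)
      obtain ⟨w, hw⟩ := h6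
      obtain ⟨j, rfl⟩ : ∃ j, k = j + 2 := ⟨k - 2, by omega⟩
      refine ⟨n + 3 ^ (j + 1) * (-t * n ^ 4), ?_⟩
      have e1 : (n + 3 ^ (j + 1) * (-t * n ^ 4)) ^ 3 - 19
          = 3 ^ (j + 3) * (t * w) + 3 ^ (2 * j + 3) * n * (-t * n ^ 4) ^ 2
            + 3 ^ (3 * j + 3) * (-t * n ^ 4) ^ 3 := by
        linear_combination ht + (3 : ℤ) ^ (j + 2) * t * hw
      rw [e1]
      refine dvd_add (dvd_add (dvd_mul_right _ _) (dvd_mul_of_dvd_left (dvd_mul_of_dvd_left ?_ _) _)) (dvd_mul_of_dvd_left ?_ _)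
      · exact pow_dvd_pow _ (by omega)
      · exact pow_dvd_pow _ (by omega)

-- cube root of 19 mod p^k for p ≡ 2 mod 3
lemma lemC (p : ℕ) (hp : p.Prime) (h3 : p % 3 = 2) (k : ℕ) (hk : 1 ≤ k) :
    ∃ n : ℤ, (p : ℤ) ^ k ∣ n ^ 3 - 19 := by
  haveI : Fact p.Prime := ⟨hp⟩
  haveI : NeZero (p ^ k) := ⟨pow_ne_zero _ hp.pos.ne'⟩
  have hcard : Nat.card (ZMod (p ^ k))ˣ = p ^ (k - 1) * (p - 1) := by
    rw [Nat.card_eq_fintype_card, ZMod.card_units_eq_totient,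
      Nat.totient_prime_pow hp (by omega)]
  have hc : (Nat.card (ZMod (p ^ k))ˣ).Coprime 3 := by
    rw [hcard]
    have h1 : ¬ 3 ∣ p ^ (k - 1) * (p - 1) := by
      intro hd
      rcases (Nat.prime_three.dvd_mul).1 hd with h | h
      · have := Nat.Prime.dvd_of_dvd_pow Nat.prime_three h
        omega
      · have := hp.two_le; omega
    exact Nat.coprime_comm.1 ((Nat.prime_three.coprime_iff_not_dvd).2 h1)
  have h19 : Nat.Coprime 19 (p ^ k) := by
    apply Nat.Coprime.pow_right
    rw [Nat.coprime_primes (by norm_num) hp]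
    omega
  obtain ⟨u, hu⟩ := (powCoprime hc).surjective (ZMod.unitOfCoprime 19 h19)
  have hu3 : ((u : ZMod (p ^ k))) ^ 3 = 19 := by
    have h := congrArg Units.val hu
    simpa [powCoprime, ZMod.coe_unitOfCoprime] using h
  obtain ⟨n, hn⟩ := ZMod.intCast_surjective ((u : ZMod (p ^ k)))
  refine ⟨n, ?_⟩
  have h0 : ((n ^ 3 - 19 : ℤ) : ZMod (p ^ k)) = 0 := by
    push_cast
    rw [hn, hu3]
    ring
  have := (ZMod.intCast_zmod_eq_zero_iff_dvd _ _).1 h0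
  rwa [Nat.cast_pow] at this

-- transfer roots along congruences
lemma lemKey (c : ℕ) (x y : ℤ) (hxy : (c : ℤ) ∣ x - y)
    (hy : (c : ℤ) ∣ (y ^ 3 - 19) * (y ^ 2 + y + 1)) :
    (c : ℤ) ∣ (x ^ 3 - 19) * (x ^ 2 + x + 1) := by
  rw [← ZMod.intCast_zmod_eq_zero_iff_dvd] at hy ⊢
  have hx : ((x : ℤ) : ZMod c) = ((y : ℤ) : ZMod c) := by
    rw [ZMod.intCast_eq_intCast_iff]
    exact (Int.modEq_iff_dvd.2 (by simpa using hxy.neg_right)).symm.symm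
  push_cast at hy ⊢
  rw [hx]
  exact hy

lemma lemCRT (a b : ℕ) (hab : Nat.Coprime a b)
    (ha : ∃ n : ℤ, (a : ℤ) ∣ (n ^ 3 - 19) * (n ^ 2 + n + 1))
    (hb : ∃ n : ℤ, (b : ℤ) ∣ (n ^ 3 - 19) * (n ^ 2 + n + 1)) :
    ∃ n : ℤ, ((a * b : ℕ) : ℤ) ∣ (n ^ 3 - 19) * (n ^ 2 + n + 1) := by
  obtain ⟨n₁, hn₁⟩ := ha
  obtain ⟨n₂, hn₂⟩ := hb
  have hcop : IsCoprime (a : ℤ) (b : ℤ) := by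
    rw [Int.isCoprime_iff_gcd_eq_one]
    simpa using hab
  obtain ⟨u, v, huv⟩ := hcop
  set n : ℤ := n₁ * v * b + n₂ * u * a with hn
  have hda : (a : ℤ) ∣ n - n₁ := ⟨u * (n₂ - n₁), by rw [hn]; linear_combination n₁ * huv⟩
  have hdb : (b : ℤ) ∣ n - n₂ := ⟨v * (n₁ - n₂), by rw [hn]; linear_combination n₂ * huv⟩
  have hcop2 : IsCoprime (a : ℤ) (b : ℤ) := ⟨u, v, huv⟩
  refine ⟨n, ?_⟩
  push_cast
  exact hcop2.mul_dvd (lemKey a n n₁ hda hn₁) (lemKey b n n₂ hdb hn₂)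

theorem stmt_5 : ∀ m : ℕ, 1 ≤ m → ∃ n : ℤ,
    (m : ℤ) ∣ (n ^ 3 - 19) * (n ^ 2 + n + 1) := by
  intro m
  induction m using Nat.recOnPosPrimePosCoprime with
  | prime_pow p k hpp hk =>
    intro _
    have hp' : p.Prime := hpp
    rcases (show p % 3 = 0 ∨ p % 3 = 1 ∨ p % 3 = 2 by omega) with h | h | h
    · -- p % 3 = 0 → p = 3
      have hp3 : p = 3 := by
        have h3 : (3 : ℕ) ∣ p := Nat.dvd_of_mod_eq_zero h
        exact ((Nat.prime_dvd_prime_iff_eq Nat.prime_three hp').1 h3).symm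
      subst hp3
      obtain ⟨n, hn⟩ := lemB k
      exact ⟨n, by push_cast; exact hn.mul_right _⟩
    · obtain ⟨n, hn⟩ := lemA p hp' h k hk
      exact ⟨n, by push_cast; exact hn.mul_left _⟩
    · obtain ⟨n, hn⟩ := lemC p hp' h k hk
      exact ⟨n, by push_cast; exact hn.mul_right _⟩
  | zero => intro h; omega
  | one => exact fun _ => ⟨0, by norm_num⟩
  | coprime a b ha hb hab Pa Pb =>
    intro _
    exact lemCRT a b hab (Pa (by omega)) (Pb (by omega))
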